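/- Suppose p,q ≥ 1, pq > 1, α,β > 0, α+β ≤ n-2, and assume the Joseph-Lundgren condition F(λ*) ≥ 0, where F(λ) = Q(α-λ)Q(β-λ) - pq·Q(α)Q(β), Q(λ) = λ(n-2-λ), λ* = (α+β)/2 - (n-2)/2. Then F has a real root in each of the intervals (-∞, 2λ*), (2λ*, λ*], [λ*, 0), and (0, ∞). Moreover, F(λ*) = 0 if and only if λ* is a double root of F. -/

import Mathlib

theorem roots_lemma (n p q α β : ℝ) (hn : 3 ≤ n)
    (hp : 1 ≤ p) (hq : 1 ≤ q) (hpq : 1 < p * q)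
    (hα : 0 < α) (hβ : 0 < β) (hab : α + β ≤ n - 2)
    (Q F : ℝ → ℝ) (lamS : ℝ)
    (hQ : ∀ lam, Q lam = lam * (n - 2 - lam))
    (hF : ∀ lam, F lam = Q (α - lam) * Q (β - lam) - p * q * Q α * Q β)
    (hlamS : lamS = (α + β) / 2 - (n - 2) / 2)
    (hJL : 0 ≤ F lamS) :
    (∃ x, x < 2 * lamS ∧ F x = 0) ∧
    (∃ x, 2 * lamS < x ∧ x ≤ lamS ∧ F x = 0) ∧
    (∃ x, lamS ≤ x ∧ x < 0 ∧ F x = 0) ∧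
    (∃ x, 0 < x ∧ F x = 0) ∧
    (F lamS = 0 ↔ F lamS = 0 ∧ deriv F lamS = 0) := by
  have key : ∀ x, F x = ((α - x) * ((n - 2) - (α - x))) * ((β - x) * ((n - 2) - (β - x)))
      - p * q * (α * ((n - 2) - α)) * (β * ((n - 2) - β)) := by
    intro x
    simp only [hF, hQ]; try ring
  have hFfun : F = fun x => ((α - x) * ((n - 2) - (α - x))) * ((β - x) * ((n - 2) - (β - x)))
      - p * q * (α * ((n - 2) - α)) * (β * ((n - 2) - β)) := funext key
  have hα2 : α < n - 2 := by linarith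
  have hβ2 : β < n - 2 := by linarith
  have hQα : 0 < α * ((n - 2) - α) := mul_pos hα (by linarith)
  have hQβ : 0 < β * ((n - 2) - β) := mul_pos hβ (by linarith)
  have hF0 : F 0 < 0 := by
    rw [key]
    nlinarith [mul_pos hQα hQβ]
  have hsym : ∀ x, F (2 * lamS - x) = F x := by
    intro x
    rw [key, key, hlamS]; ring
  have hF2 : F (2 * lamS) < 0 := by
    have h := hsym 0
    rw [sub_zero] at h
    rw [h]; exact hF0
  have hlneg : lamS < 0 := by
    rcases lt_or_eq_of_le (show lamS ≤ 0 by rw [hlamS]; linarith) with h | h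
    · exact h
    · exfalso; rw [h] at hJL; linarith
  have hcont : Continuous F := by
    rw [hFfun]; continuity
  -- root in [lamS, 0)
  have hroot1 : ∃ x, lamS ≤ x ∧ x < 0 ∧ F x = 0 := by
    have h := intermediate_value_Ico' (le_of_lt hlneg) hcont.continuousOn
    have h0 : (0 : ℝ) ∈ Set.Ioc (F 0) (F lamS) := ⟨hF0, hJL⟩
    obtain ⟨x, hx, hfx⟩ := h h0
    exact ⟨x, hx.1, hx.2, hfx⟩
  obtain ⟨x1, hx1a, hx1b, hx1c⟩ := id hroot1
  -- reflected root in (2lamS, lamS]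
  have hroot2 : ∃ x, 2 * lamS < x ∧ x ≤ lamS ∧ F x = 0 := by
    refine ⟨2 * lamS - x1, by linarith, by linarith, ?_⟩
    rw [hsym]; exact hx1c
  -- F tends to atTop at atTop
  have htop : Filter.Tendsto F Filter.atTop Filter.atTop := by
    rw [hFfun]
    apply Filter.tendsto_atTop_add_const_right
    have t1 : Filter.Tendsto (fun x : ℝ => (α - x) * ((n - 2) - (α - x)))
        Filter.atTop Filter.atBot := by
      apply Filter.Tendsto.atBot_mul_atTop₀
      · exact (Filter.tendsto_atBot_add_const_left _ α Filter.tendsto_neg_atTop_atBot).congr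
          (fun x => by ring)
      · exact (Filter.tendsto_atTop_add_const_left _ ((n - 2) - α) Filter.tendsto_id).congr
          (fun x => by simp only [id_eq]; ring)
    have t2 : Filter.Tendsto (fun x : ℝ => (β - x) * ((n - 2) - (β - x)))
        Filter.atTop Filter.atBot := by
      apply Filter.Tendsto.atBot_mul_atTop₀
      · exact (Filter.tendsto_atBot_add_const_left _ β Filter.tendsto_neg_atTop_atBot).congr
          (fun x => by ring)
      · exact (Filter.tendsto_atTop_add_const_left _ ((n - 2) - β) Filter.tendsto_id).congr
          (fun x => by simp only [id_eq]; ring)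
    exact t1.atBot_mul_atBot₀ t2
  -- root in (0, ∞)
  have hroot4 : ∃ x, 0 < x ∧ F x = 0 := by
    obtain ⟨y, hy0, hyF⟩ : ∃ y, 0 < y ∧ 0 ≤ F y := by
      have := (htop.eventually_ge_atTop 0).and (Filter.eventually_gt_atTop 0)
      obtain ⟨y, h1, h2⟩ := this.exists
      exact ⟨y, h2, h1⟩
    have h := intermediate_value_Ioc (le_of_lt hy0) hcont.continuousOn
    obtain ⟨x, hx, hfx⟩ := h ⟨hF0, hyF⟩
    exact ⟨x, hx.1, hfx⟩
  -- reflected root in (-∞, 2lamS)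
  have hroot0 : ∃ x, x < 2 * lamS ∧ F x = 0 := by
    obtain ⟨x4, hx4a, hx4b⟩ := hroot4
    exact ⟨2 * lamS - x4, by linarith, by rw [hsym]; exact hx4b⟩
  -- derivative at lamS is 0
  have hderiv : deriv F lamS = 0 := by
    have d1 : HasDerivAt (fun x : ℝ => α - x) (-1) lamS := (hasDerivAt_id lamS).const_sub α
    have d2 : HasDerivAt (fun x : ℝ => (n - 2) - (α - x)) (-(-1)) lamS := d1.const_sub (n - 2)
    have d3 : HasDerivAt (fun x : ℝ => β - x) (-1) lamS := (hasDerivAt_id lamS).const_sub β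
    have d4 : HasDerivAt (fun x : ℝ => (n - 2) - (β - x)) (-(-1)) lamS := d3.const_sub (n - 2)
    have m1 := d1.mul d2
    have m2 := d3.mul d4
    have tot := (m1.mul m2).sub_const
      (p * q * (α * ((n - 2) - α)) * (β * ((n - 2) - β)))
    rw [hFfun]
    erw [tot.deriv]; simp only [Pi.mul_apply]
    rw [hlamS]; ring
  exact ⟨hroot0, hroot2, hroot1, hroot4,
    ⟨fun h => ⟨h, hderiv⟩, fun h => h.1⟩⟩
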